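/- For all real numbers b, c, l, m > 1, the set of y ∈ (0, ∞) at which the derivative of the function y ↦ s(cosh y, b, c) + s(cosh y, l, m) vanishes has at most two elements. (This is the key step in the proof of part (2) of Lemma 5.2 (lem:derivatives): the vanishing of the derivative leads to a cubic equation in z = cosh y having z = 1 as a root, so there are at most two zeros of the derivative on (0, ∞).) -/

import Mathlib

/-- The inverse hyperbolic cosine. -/
noncomputable def arcosh (x : ℝ) : ℝ := Real.log (x + Real.sqrt (x ^ 2 - 1))

/-- Total length of the three non-alternating sides of a right-angled hyperbolic
hexagon whose alternating sides have lengths `arcosh A`, `arcosh B`, `arcosh C`. -/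
noncomputable def s (A B C : ℝ) : ℝ :=
  arcosh ((A + B * C) / Real.sqrt ((B ^ 2 - 1) * (C ^ 2 - 1))) +
  arcosh ((B + A * C) / Real.sqrt ((A ^ 2 - 1) * (C ^ 2 - 1))) +
  arcosh ((C + A * B) / Real.sqrt ((A ^ 2 - 1) * (B ^ 2 - 1)))

lemma hasDerivAt_arcosh {x : ℝ} (hx : 1 < x) :
    HasDerivAt arcosh (1 / Real.sqrt (x ^ 2 - 1)) x := by
  have h1 : (0:ℝ) < x ^ 2 - 1 := by nlinarith
  have ht : 0 < Real.sqrt (x ^ 2 - 1) := Real.sqrt_pos.2 h1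
  have ht2 : Real.sqrt (x ^ 2 - 1) ^ 2 = x ^ 2 - 1 := Real.sq_sqrt h1.le
  have hsq : HasDerivAt (fun y : ℝ => y ^ 2 - 1) (2 * x) x := by
    simpa using ((hasDerivAt_pow 2 x).sub_const 1)
  have hroot : HasDerivAt (fun y : ℝ => Real.sqrt (y ^ 2 - 1))
      (2 * x / (2 * Real.sqrt (x ^ 2 - 1))) x := hsq.sqrt h1.ne'
  have hin : HasDerivAt (fun y : ℝ => y + Real.sqrt (y ^ 2 - 1))
      (1 + 2 * x / (2 * Real.sqrt (x ^ 2 - 1))) x := (hasDerivAt_id x).add hroot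
  have hpos : 0 < x + Real.sqrt (x ^ 2 - 1) := by positivity
  have hlog := hin.log hpos.ne'
  have : (1 + 2 * x / (2 * Real.sqrt (x ^ 2 - 1))) / (x + Real.sqrt (x ^ 2 - 1))
      = 1 / Real.sqrt (x ^ 2 - 1) := by
    field_simp
    nlinarith [ht2]
  rw [this] at hlog
  exact hlog

lemma HasDerivAt.arcosh' {f : ℝ → ℝ} {f' x : ℝ} (hf : HasDerivAt f f' x) (h : 1 < f x) :
    HasDerivAt (fun y => arcosh (f y)) (f' / Real.sqrt ((f x) ^ 2 - 1)) x := by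
  simpa [div_eq_mul_inv, mul_comm, Function.comp_def] using (hasDerivAt_arcosh h).comp x hf

lemma one_lt_div_sqrt {x v : ℝ} (hv : 0 < v) (hx : 0 < x) (h : v < x ^ 2) :
    1 < x / Real.sqrt v := by
  rw [lt_div_iff₀ (Real.sqrt_pos.2 hv), one_mul]
  exact (Real.sqrt_lt' hx).2 h

lemma sqrt_sq_div {x v : ℝ} (hv : 0 < v) (h : v ≤ x ^ 2) :
    Real.sqrt ((x / Real.sqrt v) ^ 2 - 1) = Real.sqrt (x ^ 2 - v) / Real.sqrt v := by
  rw [div_pow, Real.sq_sqrt hv.le, ← Real.sqrt_div (by linarith)]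
  congr 1
  field_simp

lemma hasDerivAt_term1 (b c y : ℝ) (hb : 1 < b) (hc : 1 < c) (hy : 0 < y) :
    HasDerivAt (fun y => arcosh ((Real.cosh y + b * c) / Real.sqrt ((b ^ 2 - 1) * (c ^ 2 - 1))))
      (Real.sinh y /
        Real.sqrt (Real.cosh y ^ 2 + 2 * b * c * Real.cosh y + b ^ 2 + c ^ 2 - 1)) y := by
  set A := Real.cosh y with hA
  have hA1 : 1 ≤ A := Real.one_le_cosh y
  have hvpos : (0:ℝ) < (b ^ 2 - 1) * (c ^ 2 - 1) :=
    mul_pos (by nlinarith) (by nlinarith)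
  have hxpos : (0:ℝ) < A + b * c := by nlinarith
  have hlt : (b ^ 2 - 1) * (c ^ 2 - 1) < (A + b * c) ^ 2 := by
    nlinarith [mul_nonneg (mul_nonneg (by linarith : (0:ℝ) ≤ b) (by linarith : (0:ℝ) ≤ c))
      (by linarith : (0:ℝ) ≤ A - 1), sq_nonneg (b + c)]
  have hu : HasDerivAt (fun y => (Real.cosh y + b * c) / Real.sqrt ((b ^ 2 - 1) * (c ^ 2 - 1)))
      (Real.sinh y / Real.sqrt ((b ^ 2 - 1) * (c ^ 2 - 1))) y :=
    ((Real.hasDerivAt_cosh y).add_const _).div_const _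
  have h1 : 1 < (A + b * c) / Real.sqrt ((b ^ 2 - 1) * (c ^ 2 - 1)) :=
    one_lt_div_sqrt hvpos hxpos hlt
  have := hu.arcosh' h1
  rw [sqrt_sq_div hvpos hlt.le] at this
  have hQ : (A + b * c) ^ 2 - (b ^ 2 - 1) * (c ^ 2 - 1)
      = A ^ 2 + 2 * b * c * A + b ^ 2 + c ^ 2 - 1 := by ring
  rw [hQ] at this
  have hQpos : (0:ℝ) < A ^ 2 + 2 * b * c * A + b ^ 2 + c ^ 2 - 1 := by nlinarith
  have heq : Real.sinh y / Real.sqrt ((b ^ 2 - 1) * (c ^ 2 - 1)) /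
      (Real.sqrt (A ^ 2 + 2 * b * c * A + b ^ 2 + c ^ 2 - 1) /
        Real.sqrt ((b ^ 2 - 1) * (c ^ 2 - 1)))
      = Real.sinh y / Real.sqrt (A ^ 2 + 2 * b * c * A + b ^ 2 + c ^ 2 - 1) := by
    have h2 : Real.sqrt ((b ^ 2 - 1) * (c ^ 2 - 1)) ≠ 0 := (Real.sqrt_pos.2 hvpos).ne'
    have h3 : Real.sqrt (A ^ 2 + 2 * b * c * A + b ^ 2 + c ^ 2 - 1) ≠ 0 :=
      (Real.sqrt_pos.2 hQpos).ne'
    field_simp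
  rw [heq] at this
  exact this

lemma hasDerivAt_term2 (b c y : ℝ) (hb : 1 < b) (hc : 1 < c) (hy : 0 < y) :
    HasDerivAt
      (fun y => arcosh ((b + Real.cosh y * c) / Real.sqrt ((Real.cosh y ^ 2 - 1) * (c ^ 2 - 1))))
      (-(c + Real.cosh y * b) / (Real.sinh y *
        Real.sqrt (Real.cosh y ^ 2 + 2 * b * c * Real.cosh y + b ^ 2 + c ^ 2 - 1))) y := by
  have hA1 : 1 < Real.cosh y := Real.one_lt_cosh.2 hy.ne'
  set A := Real.cosh y with hA
  have hS : 0 < Real.sinh y := Real.sinh_pos_iff.2 hy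
  set S := Real.sinh y with hSdef
  have hS2 : S ^ 2 = A ^ 2 - 1 := by
    rw [hSdef, hA, Real.sinh_sq]
  have hc1 : (0:ℝ) < c ^ 2 - 1 := by nlinarith
  have hvpos : (0:ℝ) < (A ^ 2 - 1) * (c ^ 2 - 1) := mul_pos (by nlinarith) hc1
  set v := (A ^ 2 - 1) * (c ^ 2 - 1) with hv
  have htv : Real.sqrt v ≠ 0 := (Real.sqrt_pos.2 hvpos).ne'
  have ht2 : Real.sqrt v ^ 2 = v := Real.sq_sqrt hvpos.le
  -- derivative of v as a function of y
  have hvder : HasDerivAt (fun y => (Real.cosh y ^ 2 - 1) * (c ^ 2 - 1))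
      (2 * A * S * (c ^ 2 - 1)) y := by
    have h1 : HasDerivAt (fun y => Real.cosh y ^ 2 - 1) (2 * A * S) y := by
      have := ((Real.hasDerivAt_cosh y).pow 2).sub_const 1
      simpa [mul_comm, mul_assoc, mul_left_comm] using this
    simpa using h1.mul_const (c ^ 2 - 1)
  have hsq : HasDerivAt (fun y => Real.sqrt ((Real.cosh y ^ 2 - 1) * (c ^ 2 - 1)))
      (2 * A * S * (c ^ 2 - 1) / (2 * Real.sqrt v)) y := hvder.sqrt hvpos.ne'
  have hnum : HasDerivAt (fun y => b + Real.cosh y * c) (S * c) y := by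
    simpa using ((Real.hasDerivAt_cosh y).mul_const c).const_add b
  have hu : HasDerivAt
      (fun y => (b + Real.cosh y * c) / Real.sqrt ((Real.cosh y ^ 2 - 1) * (c ^ 2 - 1)))
      ((S * c * Real.sqrt v - (b + A * c) * (2 * A * S * (c ^ 2 - 1) / (2 * Real.sqrt v)))
        / Real.sqrt v ^ 2) y := hnum.div hsq htv
  have hxpos : (0:ℝ) < b + A * c := by nlinarith
  have hlt : v < (b + A * c) ^ 2 := by
    rw [hv]
    nlinarith [mul_nonneg (mul_nonneg (by linarith : (0:ℝ) ≤ b) (by linarith : (0:ℝ) ≤ c))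
      (by linarith : (0:ℝ) ≤ A - 1), sq_nonneg (b + c)]
  have h1 : 1 < (b + A * c) / Real.sqrt v := one_lt_div_sqrt hvpos hxpos hlt
  have hder := hu.arcosh' h1
  rw [sqrt_sq_div hvpos hlt.le] at hder
  have hQ : (b + A * c) ^ 2 - v = A ^ 2 + 2 * b * c * A + b ^ 2 + c ^ 2 - 1 := by
    rw [hv]; ring
  rw [hQ] at hder
  set Q := A ^ 2 + 2 * b * c * A + b ^ 2 + c ^ 2 - 1 with hQdef
  have hQpos : (0:ℝ) < Q := by rw [hQdef]; nlinarith
  have hrtQ : Real.sqrt Q ≠ 0 := (Real.sqrt_pos.2 hQpos).ne'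
  have heq : (S * c * Real.sqrt v - (b + A * c) * (2 * A * S * (c ^ 2 - 1) / (2 * Real.sqrt v)))
        / Real.sqrt v ^ 2 / (Real.sqrt Q / Real.sqrt v)
      = -(c + A * b) / (S * Real.sqrt Q) := by
    have ht2' : Real.sqrt v ^ 2 = (A ^ 2 - 1) * (c ^ 2 - 1) := by rw [ht2, hv]
    field_simp
    rw [hv]
    rw [hv] at ht2'
    linear_combination (S ^ 2 * c + c + b * A) * ht2' +
      (c * (A ^ 2 - 1) * (c ^ 2 - 1) - (A * b + c * A ^ 2) * (c ^ 2 - 1)) * hS2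
  rw [heq] at hder
  exact hder

lemma hasDerivAt_scomp (b c y : ℝ) (hb : 1 < b) (hc : 1 < c) (hy : 0 < y) :
    HasDerivAt (fun y => s (Real.cosh y) b c)
      ((Real.cosh y + 1) / Real.sinh y * ((Real.cosh y - 1 - (b + c)) /
        Real.sqrt (Real.cosh y ^ 2 + 2 * b * c * Real.cosh y + b ^ 2 + c ^ 2 - 1))) y := by
  have hA1 : 1 < Real.cosh y := Real.one_lt_cosh.2 hy.ne'
  have hS : 0 < Real.sinh y := Real.sinh_pos_iff.2 hy
  have h3 := hasDerivAt_term2 c b y hc hb hy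
  have hcomm : Real.cosh y ^ 2 + 2 * c * b * Real.cosh y + c ^ 2 + b ^ 2 - 1
      = Real.cosh y ^ 2 + 2 * b * c * Real.cosh y + b ^ 2 + c ^ 2 - 1 := by ring
  rw [hcomm] at h3
  have hsum := ((hasDerivAt_term1 b c y hb hc hy).add (hasDerivAt_term2 b c y hb hc hy)).add h3
  set A := Real.cosh y with hA
  set S := Real.sinh y with hSdef
  set Q := A ^ 2 + 2 * b * c * A + b ^ 2 + c ^ 2 - 1 with hQdef
  have hQpos : (0:ℝ) < Q := by
    rw [hQdef]
    nlinarith [mul_nonneg (mul_nonneg (by linarith : (0:ℝ) ≤ b) (by linarith : (0:ℝ) ≤ c))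
      (by linarith : (0:ℝ) ≤ A - 1), sq_nonneg (b + c)]
  have hrtQ : (0:ℝ) < Real.sqrt Q := Real.sqrt_pos.2 hQpos
  have hS2 : S ^ 2 = A ^ 2 - 1 := by rw [hSdef, hA, Real.sinh_sq]
  have heq : S / Real.sqrt Q + -(c + A * b) / (S * Real.sqrt Q) + -(b + A * c) / (S * Real.sqrt Q)
      = (A + 1) / S * ((A - 1 - (b + c)) / Real.sqrt Q) := by
    field_simp
    linear_combination hS2
  rw [heq] at hsum
  have : (fun y => s (Real.cosh y) b c) = fun y =>
      arcosh ((Real.cosh y + b * c) / Real.sqrt ((b ^ 2 - 1) * (c ^ 2 - 1))) +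
      arcosh ((b + Real.cosh y * c) / Real.sqrt ((Real.cosh y ^ 2 - 1) * (c ^ 2 - 1))) +
      arcosh ((c + Real.cosh y * b) / Real.sqrt ((Real.cosh y ^ 2 - 1) * (b ^ 2 - 1))) := by
    funext z; simp [s]
  rw [this]
  exact hsum

lemma hasDerivAt_hcomp (b c y : ℝ) (hb : 1 < b) (hc : 1 < c) (hy : 0 < y) :
    ∃ d : ℝ, 0 < d ∧ HasDerivAt (fun y => (Real.cosh y - 1 - (b + c)) /
      Real.sqrt (Real.cosh y ^ 2 + 2 * b * c * Real.cosh y + b ^ 2 + c ^ 2 - 1)) d y := by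
  have hA1 : 1 < Real.cosh y := Real.one_lt_cosh.2 hy.ne'
  have hS : 0 < Real.sinh y := Real.sinh_pos_iff.2 hy
  have hN : HasDerivAt (fun y => Real.cosh y - 1 - (b + c)) (Real.sinh y) y :=
    ((Real.hasDerivAt_cosh y).sub_const 1).sub_const (b + c)
  have hQd : HasDerivAt
      (fun y => Real.cosh y ^ 2 + 2 * b * c * Real.cosh y + b ^ 2 + c ^ 2 - 1)
      (2 * Real.cosh y * Real.sinh y + 2 * b * c * Real.sinh y) y := by
    have h1 : HasDerivAt (fun y => Real.cosh y ^ 2) (2 * Real.cosh y * Real.sinh y) y := by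
      have := (Real.hasDerivAt_cosh y).fun_pow 2
      simpa [mul_comm, mul_assoc, mul_left_comm] using this
    have h2 : HasDerivAt (fun y => 2 * b * c * Real.cosh y) (2 * b * c * Real.sinh y) y :=
      (Real.hasDerivAt_cosh y).const_mul _
    simpa [add_assoc] using ((h1.add h2).add_const (b ^ 2 + c ^ 2)).sub_const 1
  set A := Real.cosh y with hA
  set S := Real.sinh y with hSdef
  set Q := A ^ 2 + 2 * b * c * A + b ^ 2 + c ^ 2 - 1 with hQdef
  have hQpos : (0:ℝ) < Q := by
    rw [hQdef]
    nlinarith [mul_nonneg (mul_nonneg (by linarith : (0:ℝ) ≤ b) (by linarith : (0:ℝ) ≤ c))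
      (by linarith : (0:ℝ) ≤ A - 1), sq_nonneg (b + c)]
  have hrtQ : (0:ℝ) < Real.sqrt Q := Real.sqrt_pos.2 hQpos
  have ht2 : Real.sqrt Q ^ 2 = Q := Real.sq_sqrt hQpos.le
  have hW : HasDerivAt (fun y =>
      Real.sqrt (Real.cosh y ^ 2 + 2 * b * c * Real.cosh y + b ^ 2 + c ^ 2 - 1))
      ((2 * A * S + 2 * b * c * S) / (2 * Real.sqrt Q)) y := hQd.sqrt hQpos.ne'
  have hdiv := hN.div hW hrtQ.ne'
  refine ⟨_, ?_, hdiv⟩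
  have hkey : (0:ℝ) < Q - (A - 1 - (b + c)) * (A + b * c) := by
    have h1 : (0:ℝ) ≤ (A - 1) * (1 + b + c + b * c) :=
      mul_nonneg (by linarith) (by nlinarith)
    rw [hQdef]; nlinarith [mul_pos (zero_lt_one.trans hb) (zero_lt_one.trans hc),
      mul_pos (mul_pos (zero_lt_one.trans hb) (zero_lt_one.trans hb)) (zero_lt_one.trans hc),
      mul_pos (mul_pos (zero_lt_one.trans hc) (zero_lt_one.trans hc)) (zero_lt_one.trans hb)]
  have heq : (S * Real.sqrt Q - (A - 1 - (b + c)) * ((2 * A * S + 2 * b * c * S)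
        / (2 * Real.sqrt Q))) / Real.sqrt Q ^ 2
      = S * (Q - (A - 1 - (b + c)) * (A + b * c)) / Real.sqrt Q ^ 3 := by
    field_simp
    linear_combination ht2
  rw [heq]
  positivity

theorem critical_points_at_most_two (b c l m : ℝ)
    (hb : 1 < b) (hc : 1 < c) (hl : 1 < l) (hm : 1 < m) :
    Set.encard {y : ℝ | 0 < y ∧
        deriv (fun y => s (Real.cosh y) b c + s (Real.cosh y) l m) y = 0} ≤ 2 := by
  set G : ℝ → ℝ := fun y =>
    (Real.cosh y - 1 - (b + c)) /
      Real.sqrt (Real.cosh y ^ 2 + 2 * b * c * Real.cosh y + b ^ 2 + c ^ 2 - 1) +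
    (Real.cosh y - 1 - (l + m)) /
      Real.sqrt (Real.cosh y ^ 2 + 2 * l * m * Real.cosh y + l ^ 2 + m ^ 2 - 1) with hG
  have hGd : ∀ y : ℝ, 0 < y → ∃ d : ℝ, 0 < d ∧ HasDerivAt G d y := by
    intro y hy
    obtain ⟨d1, hd1, h1⟩ := hasDerivAt_hcomp b c y hb hc hy
    obtain ⟨d2, hd2, h2⟩ := hasDerivAt_hcomp l m y hl hm hy
    exact ⟨d1 + d2, by linarith, h1.add h2⟩
  have hmono : StrictMonoOn G (Set.Ioi 0) := by
    apply strictMonoOn_of_deriv_pos (convex_Ioi 0)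
    · intro y hy
      obtain ⟨d, _, hd⟩ := hGd y hy
      exact hd.continuousAt.continuousWithinAt
    · intro y hy
      rw [interior_Ioi] at hy
      obtain ⟨d, hdpos, hd⟩ := hGd y hy
      rw [hd.deriv]
      exact hdpos
  have hzero : ∀ y : ℝ, 0 < y →
      deriv (fun y => s (Real.cosh y) b c + s (Real.cosh y) l m) y = 0 → G y = 0 := by
    intro y hy hder
    have hF := (hasDerivAt_scomp b c y hb hc hy).add (hasDerivAt_scomp l m y hl hm hy)
    have hS : 0 < Real.sinh y := Real.sinh_pos_iff.2 hy
    have hA1 : 1 < Real.cosh y := Real.one_lt_cosh.2 hy.ne'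
    have hfac : (0:ℝ) < (Real.cosh y + 1) / Real.sinh y := by positivity
    have h0 : (Real.cosh y + 1) / Real.sinh y * G y = 0 := by
      rw [hG, mul_add, ← hF.deriv]
      exact hder
    exact (mul_eq_zero.1 h0).resolve_left hfac.ne'
  have hsub : {y : ℝ | 0 < y ∧
      deriv (fun y => s (Real.cosh y) b c + s (Real.cosh y) l m) y = 0}.Subsingleton := by
    intro y1 h1 y2 h2
    exact hmono.injOn h1.1 h2.1 ((hzero y1 h1.1 h1.2).trans (hzero y2 h2.1 h2.2).symm)
  exact le_trans (Set.encard_le_one_iff.2 (fun a b ha hb => hsub ha hb)) one_le_two
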